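/- The bivector P_b (κ = −1) is not compatible with the canonical Lie–Poisson bivector P on e*(3): the Schouten bracket [P, P_b] does not vanish; equivalently, there exist coordinate functions x, y, z for which the mixed Jacobi sum over cyclic permutations of ({x,{y,z}_b} + {x,{y,z}}) is nonzero (for generic distinct b_1, b_2, b_3). -/

import Mathlib

open scoped BigOperators
noncomputable section

/-- ℝ³ as functions `Fin 3 → ℝ`. -/
abbrev R3 := Fin 3 → ℝ

/-- Phase space: pairs `(γ, M)`. -/
abbrev St := R3 × R3

/-- Standard scalar product in ℝ³. -/
def dot3 (x y : R3) : ℝ := ∑ i, x i * y i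

/-- Cross product in ℝ³. -/
def cross (x y : R3) : R3 :=
  ![x 1 * y 2 - x 2 * y 1, x 2 * y 0 - x 0 * y 2, x 0 * y 1 - x 1 * y 0]

/-- Levi-Civita symbol. -/
def eps (i j k : Fin 3) : ℝ :=
  ((((j : ℤ) - (i : ℤ)) * ((k : ℤ) - (i : ℤ)) * ((k : ℤ) - (j : ℤ))) / 2 : ℤ)

/-- Application of the diagonal matrix A = diag a. -/
def Aapp (a : R3) (v : R3) : R3 := fun i => a i * v i

/-- Angular velocity ω expressed through M. -/
def omg (a : R3) (d : ℝ) (x : St) : R3 := fun i =>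
  a i * x.2 i + d * dot3 x.1 (Aapp a x.2) / (1 - d * dot3 x.1 (Aapp a x.1)) * (a i * x.1 i)

/-- g(γ) = sqrt(1 - d (γ, Aγ)). -/
def gfun (a : R3) (d : ℝ) (γ : R3) : ℝ := Real.sqrt (1 - d * dot3 γ (Aapp a γ))

/-- Partial derivative in the γ (inl) or M (inr) direction. -/
def pd : (Fin 3 ⊕ Fin 3) → (St → ℝ) → St → ℝ
  | .inl i, F, x => fderiv ℝ F x (Pi.single i 1, 0)
  | .inr i, F, x => fderiv ℝ F x (0, Pi.single i 1)

/-- Bracket of two functions determined by a structure matrix π. -/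
def pb (π : St → (Fin 3 ⊕ Fin 3) → (Fin 3 ⊕ Fin 3) → ℝ) (F G : St → ℝ) (x : St) : ℝ :=
  ∑ u, ∑ v, π x u v * pd u F x * pd v G x

/-- Structure matrix of the bracket {·,·}_g. -/
def piG (a : R3) (d : ℝ) (x : St) : (Fin 3 ⊕ Fin 3) → (Fin 3 ⊕ Fin 3) → ℝ
  | .inl _, .inl _ => 0
  | .inl i, .inr j => ∑ k, eps i j k * gfun a d x.1 * x.1 k
  | .inr i, .inl j => ∑ k, eps i j k * gfun a d x.1 * x.1 k
  | .inr i, .inr j => ∑ k, eps i j k *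
      (gfun a d x.1 * x.2 k - d * dot3 x.2 (Aapp a x.1) * x.1 k / gfun a d x.1)

/-- Coordinate functions on the phase space. -/
def coordFn : (Fin 3 ⊕ Fin 3) → St → ℝ
  | .inl i => fun x => x.1 i
  | .inr i => fun x => x.2 i

/-- Entries of B = tr(A⁻¹)E - 2A⁻¹ (the case κ = -1): b_i = tr A⁻¹ - 2/a_i. -/
def bb (a : R3) (i : Fin 3) : ℝ := (∑ m, (a m)⁻¹) - 2 * (a i)⁻¹

/-- α_k = C₂ + b_k (γ, M) with C₂ = (γ, B M). -/
def alf (a : R3) (x : St) (k : Fin 3) : ℝ :=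
  (∑ m, x.1 m * bb a m * x.2 m) + bb a k * dot3 x.1 x.2

/-- The table of brackets {M_i, γ_j}_b. -/
def pmg (a : R3) (d : ℝ) (γ : R3) : Fin 3 → Fin 3 → ℝ :=
  let g := gfun a d γ
  let b := bb a
  ![![ g * (b 1 - b 2) * γ 0 * γ 1 * γ 2,
       g * γ 2 * (b 2 * (γ 0 ^ 2 + γ 2 ^ 2) + b 1 * γ 1 ^ 2 - b 1 * b 2 / (2 * d)),
       -(g * γ 1 * (b 1 * (γ 0 ^ 2 + γ 1 ^ 2) + b 2 * γ 2 ^ 2 - b 1 * b 2 / (2 * d))) ],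
    ![ -(g * γ 2 * (b 0 * γ 0 ^ 2 + b 2 * (γ 1 ^ 2 + γ 2 ^ 2) - b 0 * b 2 / (2 * d))),
       g * (b 2 - b 0) * γ 0 * γ 1 * γ 2,
       g * γ 0 * (b 0 * (γ 0 ^ 2 + γ 1 ^ 2) + b 2 * γ 2 ^ 2 - b 0 * b 2 / (2 * d)) ],
    ![ g * γ 1 * (b 0 * γ 0 ^ 2 + b 1 * (γ 1 ^ 2 + γ 2 ^ 2) - b 0 * b 1 / (2 * d)),
       -(g * γ 0 * (b 0 * (γ 0 ^ 2 + γ 2 ^ 2) + b 1 * γ 1 ^ 2 - b 0 * b 1 / (2 * d))),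
       g * (b 0 - b 1) * γ 0 * γ 1 * γ 2 ]]

/-- The component f_k with {M_i, M_j}_b = Σ_k ε_ijk f_k. -/
def fmm (a : R3) (d : ℝ) (x : St) (k : Fin 3) : ℝ :=
  let g := gfun a d x.1
  let b := bb a
  g * (-(alf a x k) * x.1 k + dot3 x.1 x.1 * b k * x.2 k - (b k) ^ 2 * x.2 k / (2 * d))
  - g⁻¹ * x.1 k * (2 * d * dot3 x.1 x.1 - (b 0 + b 1 + b 2)) *
    ( alf a x k * b k / (∏ m ∈ Finset.univ.filter (fun m => m ≠ k), (b k + b m))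
      + (∏ m ∈ Finset.univ.filter (fun m => m ≠ k), (b k - b m)) * b k * x.1 k * x.2 k /
          ((b 0 + b 1) * (b 1 + b 2) * (b 0 + b 2)) )

/-- Structure matrix of the κ = -1 bracket {·,·}_b. -/
def piB (a : R3) (d : ℝ) (x : St) : (Fin 3 ⊕ Fin 3) → (Fin 3 ⊕ Fin 3) → ℝ
  | .inl _, .inl _ => 0
  | .inl i, .inr j => -(pmg a d x.1 j i)
  | .inr i, .inl j => pmg a d x.1 i j
  | .inr i, .inr j => ∑ k, eps i j k * fmm a d x k

/-- Structure matrix of the canonical Lie-Poisson bracket on e*(3). -/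
def piP (x : St) : (Fin 3 ⊕ Fin 3) → (Fin 3 ⊕ Fin 3) → ℝ
  | .inl _, .inl _ => 0
  | .inl i, .inr j => ∑ k, eps i j k * x.1 k
  | .inr i, .inl j => ∑ k, eps i j k * x.1 k
  | .inr i, .inr j => ∑ k, eps i j k * x.2 k

-- basics test
example : eps 0 1 2 = 1 := by norm_num [eps]
example : eps 1 1 0 = 0 := by norm_num [eps]
example : eps 1 0 2 = -1 := by norm_num [eps]

def Cγ (i : Fin 3) : St →L[ℝ] ℝ :=
  (ContinuousLinearMap.proj i).comp (ContinuousLinearMap.fst ℝ R3 R3)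
def CM (i : Fin 3) : St →L[ℝ] ℝ :=
  (ContinuousLinearMap.proj i).comp (ContinuousLinearMap.snd ℝ R3 R3)

example (x : St) (i : Fin 3) : HasFDerivAt (fun y : St => y.1 i) (Cγ i) x :=
  (Cγ i).hasFDerivAt

lemma pd_inl_eq {F : St → ℝ} {L : St →L[ℝ] ℝ} {x : St} (h : HasFDerivAt F L x) (i : Fin 3) :
    pd (.inl i) F x = L (Pi.single i 1, 0) := by
  show fderiv ℝ F x (Pi.single i 1, 0) = _
  rw [h.fderiv]

lemma pd_coord (s p : Fin 3 ⊕ Fin 3) (x : St) :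
    pd s (coordFn p) x = if s = p then 1 else 0 := by
  cases s with
  | inl i =>
    cases p with
    | inl j =>
      have h : HasFDerivAt (fun y : St => y.1 j) (Cγ j) x := (Cγ j).hasFDerivAt
      show fderiv ℝ (fun y : St => y.1 j) x (Pi.single i 1, 0) = _
      rw [h.fderiv]
      simp [Cγ, Pi.single_apply, eq_comm]
    | inr j =>
      have h : HasFDerivAt (fun y : St => y.2 j) (CM j) x := (CM j).hasFDerivAt
      show fderiv ℝ (fun y : St => y.2 j) x (Pi.single i 1, 0) = _
      rw [h.fderiv]
      simp [CM]
  | inr i =>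
    cases p with
    | inl j =>
      have h : HasFDerivAt (fun y : St => y.1 j) (Cγ j) x := (Cγ j).hasFDerivAt
      show fderiv ℝ (fun y : St => y.1 j) x (0, Pi.single i 1) = _
      rw [h.fderiv]
      simp [Cγ]
    | inr j =>
      have h : HasFDerivAt (fun y : St => y.2 j) (CM j) x := (CM j).hasFDerivAt
      show fderiv ℝ (fun y : St => y.2 j) x (0, Pi.single i 1) = _
      rw [h.fderiv]
      simp [CM, Pi.single_apply, eq_comm]

lemma pb_coord_left (π : St → (Fin 3 ⊕ Fin 3) → (Fin 3 ⊕ Fin 3) → ℝ)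
    (p : Fin 3 ⊕ Fin 3) (G : St → ℝ) (x : St) :
    pb π (coordFn p) G x = ∑ s, π x p s * pd s G x := by
  unfold pb
  rw [Finset.sum_comm]
  refine Finset.sum_congr rfl fun v _ => ?_
  rw [Finset.sum_eq_single p]
  · simp [pd_coord]
  · intro b _ hb
    simp [pd_coord, hb]
  · simp

lemma pb_coord (π : St → (Fin 3 ⊕ Fin 3) → (Fin 3 ⊕ Fin 3) → ℝ)
    (p q : Fin 3 ⊕ Fin 3) (x : St) :
    pb π (coordFn p) (coordFn q) x = π x p q := by
  rw [pb_coord_left]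
  rw [Finset.sum_eq_single q]
  · simp [pd_coord]
  · intro b _ hb
    simp [pd_coord, hb]
  · simp

def aW : R3 := ![1, 1/2, 1/4]
def dW : ℝ := 3/4
def ptW : St := (![1,0,0], ![0,0,0])

lemma bb0 : bb aW 0 = 5 := by norm_num [bb, aW, Fin.sum_univ_three, Matrix.cons_val_two]
lemma bb1 : bb aW 1 = 3 := by norm_num [bb, aW, Fin.sum_univ_three, Matrix.cons_val_two]
lemma bb2 : bb aW 2 = -1 := by norm_num [bb, aW, Fin.sum_univ_three, Matrix.cons_val_two]

lemma hpoly : 1 - dW * dot3 ptW.1 (Aapp aW ptW.1) = 1/4 := by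
  norm_num [dW, dot3, Aapp, aW, ptW, Fin.sum_univ_three, Matrix.cons_val_two]

lemma gpt : gfun aW (3/4) ![1,0,0] = 1/2 := by
  rw [show gfun aW (3/4) ![1,0,0] = gfun aW dW ptW.1 from rfl, gfun, hpoly,
    show (1/4 : ℝ) = (1/2)^2 by norm_num, Real.sqrt_sq (by norm_num)]

lemma pmg21 : pmg aW dW ptW.1 2 1 = 5/2 := by
  simp only [pmg]
  norm_num [ptW, gpt, bb0, bb1, bb2, dW, Matrix.cons_val_two]

lemma pmg12 : pmg aW dW ptW.1 1 2 = 25/6 := by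
  simp only [pmg]
  norm_num [ptW, gpt, bb0, bb1, bb2, dW, Matrix.cons_val_two]

lemma pd_inl_line {F : St → ℝ} {x : St} (i : Fin 3) (h : DifferentiableAt ℝ F x) :
    pd (.inl i) F x = deriv (fun t : ℝ => F (x.1 + t • (Pi.single i 1 : R3), x.2)) 0 := by
  have h1 : HasDerivAt (fun t : ℝ => x.1 + t • (Pi.single i 1 : R3)) (Pi.single i 1 : R3) 0 := by
    simpa using ((hasDerivAt_id (0:ℝ)).smul_const (Pi.single i 1 : R3)).const_add x.1
  have hline : HasDerivAt (fun t : ℝ => ((x.1 + t • (Pi.single i 1 : R3), x.2) : St))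
      ((Pi.single i 1 : R3), (0 : R3)) 0 := h1.prodMk (hasDerivAt_const 0 x.2)
  have hx : (x.1 + (0:ℝ) • (Pi.single i 1 : R3), x.2) = x := by simp
  have hcomp : HasDerivAt (fun t : ℝ => F (x.1 + t • (Pi.single i 1 : R3), x.2))
      (fderiv ℝ F x (Pi.single i 1, 0)) 0 := by
    have hf : HasFDerivAt F (fderiv ℝ F x) ((fun t : ℝ => ((x.1 + t • (Pi.single i 1 : R3), x.2) : St)) 0) := by
      rw [show (fun t : ℝ => ((x.1 + t • (Pi.single i 1 : R3), x.2) : St)) 0 = x by simpa using hx]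
      exact h.hasFDerivAt
    exact hf.comp_hasDerivAt 0 hline
  rw [show pd (.inl i) F x = fderiv ℝ F x (Pi.single i 1, 0) from rfl, hcomp.deriv]

lemma pd_inr_line {F : St → ℝ} {x : St} (i : Fin 3) (h : DifferentiableAt ℝ F x) :
    pd (.inr i) F x = deriv (fun t : ℝ => F (x.1, x.2 + t • (Pi.single i 1 : R3))) 0 := by
  have h1 : HasDerivAt (fun t : ℝ => x.2 + t • (Pi.single i 1 : R3)) (Pi.single i 1 : R3) 0 := by
    simpa using ((hasDerivAt_id (0:ℝ)).smul_const (Pi.single i 1 : R3)).const_add x.2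
  have hline : HasDerivAt (fun t : ℝ => ((x.1, x.2 + t • (Pi.single i 1 : R3)) : St))
      ((0 : R3), (Pi.single i 1 : R3)) 0 := (hasDerivAt_const 0 x.1).prodMk h1
  have hx : (x.1, x.2 + (0:ℝ) • (Pi.single i 1 : R3)) = x := by simp
  have hcomp : HasDerivAt (fun t : ℝ => F (x.1, x.2 + t • (Pi.single i 1 : R3)))
      (fderiv ℝ F x (0, Pi.single i 1)) 0 := by
    have hf : HasFDerivAt F (fderiv ℝ F x) ((fun t : ℝ => ((x.1, x.2 + t • (Pi.single i 1 : R3)) : St)) 0) := by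
      rw [show (fun t : ℝ => ((x.1, x.2 + t • (Pi.single i 1 : R3)) : St)) 0 = x by simpa using hx]
      exact h.hasFDerivAt
    exact hf.comp_hasDerivAt 0 hline
  rw [show pd (.inr i) F x = fderiv ℝ F x (0, Pi.single i 1) from rfl, hcomp.deriv]

-- explicit sqrt-polynomial form of gfun ∘ fst
lemma gfun_eq : (fun y : St => gfun aW dW y.1) =
    fun y : St => Real.sqrt (1 - dW * (y.1 0 * (aW 0 * y.1 0) +
      (y.1 1 * (aW 1 * y.1 1) + y.1 2 * (aW 2 * y.1 2)))) := by
  funext y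
  simp [gfun, dot3, Aapp, Fin.sum_univ_three, add_assoc]

lemma inner_pt : 1 - dW * (ptW.1 0 * (aW 0 * ptW.1 0) +
      (ptW.1 1 * (aW 1 * ptW.1 1) + ptW.1 2 * (aW 2 * ptW.1 2))) = 1/4 := by
  norm_num [ptW, aW, dW, Matrix.cons_val_two]

lemma hg_diff : DifferentiableAt ℝ (fun y : St => gfun aW dW y.1) ptW := by
  rw [gfun_eq]
  have hpoly : DifferentiableAt ℝ (fun y : St => 1 - dW * (y.1 0 * (aW 0 * y.1 0) +
      (y.1 1 * (aW 1 * y.1 1) + y.1 2 * (aW 2 * y.1 2)))) ptW := by fun_prop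
  exact hpoly.sqrt (by rw [inner_pt]; norm_num)

lemma FA_eq : (fun y : St => -(pmg aW dW y.1 0 1)) =
    fun y : St => -(Real.sqrt (1 - dW * (y.1 0 * (aW 0 * y.1 0) +
      (y.1 1 * (aW 1 * y.1 1) + y.1 2 * (aW 2 * y.1 2)))) * y.1 2 *
      (bb aW 2 * (y.1 0 ^ 2 + y.1 2 ^ 2) + bb aW 1 * y.1 1 ^ 2 - bb aW 1 * bb aW 2 / (2 * dW))) := by
  have := congrFun gfun_eq
  funext y
  simp only [pmg]
  rw [← this y]
  simp

lemma lineA_eq : (fun t : ℝ => (fun y : St => -(Real.sqrt (1 - dW * (y.1 0 * (aW 0 * y.1 0) +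
      (y.1 1 * (aW 1 * y.1 1) + y.1 2 * (aW 2 * y.1 2)))) * y.1 2 *
      (bb aW 2 * (y.1 0 ^ 2 + y.1 2 ^ 2) + bb aW 1 * y.1 1 ^ 2 - bb aW 1 * bb aW 2 / (2 * dW))))
      (ptW.1 + t • (Pi.single 2 1 : R3), ptW.2)) =
    fun t : ℝ => -(Real.sqrt (1/4 - 3/16 * t^2) * (t * (1 - t^2))) := by
  funext t
  have e0 : (ptW.1 + t • (Pi.single 2 1 : R3)) 0 = 1 := by
    simp [ptW, Pi.single_apply]
  have e1 : (ptW.1 + t • (Pi.single 2 1 : R3)) 1 = 0 := by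
    simp [ptW, Pi.single_apply]
  have e2 : (ptW.1 + t • (Pi.single 2 1 : R3)) 2 = t := by
    simp [ptW, Pi.single_apply]
  simp only [e0, e1, e2]
  rw [show 1 - dW * (1 * (aW 0 * 1) + (0 * (aW 1 * 0) + t * (aW 2 * t))) = 1/4 - 3/16 * t^2 by
    norm_num [aW, dW, Matrix.cons_val_two]; ring]
  rw [bb1, bb2]
  norm_num [dW]
  ring

lemma sqrt14 : Real.sqrt (1/4 - 3/16 * (0:ℝ)^2) = 1/2 := by
  rw [show (1/4 - 3/16 * (0:ℝ)^2) = (1/2)^2 by norm_num, Real.sqrt_sq (by norm_num)]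

lemma lemA : pd (.inl 2) (fun y : St => -(pmg aW dW y.1 0 1)) ptW = -(1/2) := by
  rw [FA_eq]
  have hdiff : DifferentiableAt ℝ (fun y : St => -(Real.sqrt (1 - dW * (y.1 0 * (aW 0 * y.1 0) +
      (y.1 1 * (aW 1 * y.1 1) + y.1 2 * (aW 2 * y.1 2)))) * y.1 2 *
      (bb aW 2 * (y.1 0 ^ 2 + y.1 2 ^ 2) + bb aW 1 * y.1 1 ^ 2 - bb aW 1 * bb aW 2 / (2 * dW)))) ptW := by
    have hs : DifferentiableAt ℝ (fun y : St => Real.sqrt (1 - dW * (y.1 0 * (aW 0 * y.1 0) +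
      (y.1 1 * (aW 1 * y.1 1) + y.1 2 * (aW 2 * y.1 2))))) ptW := by
      have hpoly : DifferentiableAt ℝ (fun y : St => 1 - dW * (y.1 0 * (aW 0 * y.1 0) +
        (y.1 1 * (aW 1 * y.1 1) + y.1 2 * (aW 2 * y.1 2)))) ptW := by fun_prop
      exact hpoly.sqrt (by rw [inner_pt]; norm_num)
    exact (((hs.mul (by fun_prop)).mul (by fun_prop))).neg
  rw [pd_inl_line 2 hdiff, lineA_eq]
  have hin : HasDerivAt (fun t : ℝ => 1/4 - 3/16 * t^2) 0 0 := by
    have := ((hasDerivAt_pow 2 (0:ℝ)).const_mul (3/16 : ℝ)).const_sub (1/4 : ℝ)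
    simpa using this
  have hs : HasDerivAt (fun t : ℝ => Real.sqrt (1/4 - 3/16 * t^2)) 0 0 := by
    have := hin.sqrt (by norm_num)
    simpa using this
  have hrest : HasDerivAt (fun t : ℝ => t * (1 - t^2)) 1 0 := by
    have := (hasDerivAt_id (0:ℝ)).fun_mul (((hasDerivAt_pow 2 (0:ℝ)).const_sub 1))
    simpa using this
  have hmul := (hs.fun_mul hrest).fun_neg
  rw [hmul.deriv]
  rw [sqrt14]
  norm_num

lemma filter_ne2 : Finset.univ.filter (fun m : Fin 3 => m ≠ 2) = {0, 1} := by decide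

lemma FB_eq : (fun y : St => fmm aW dW y 2) =
    fun y : St =>
      Real.sqrt (1 - dW * (y.1 0 * (aW 0 * y.1 0) +
        (y.1 1 * (aW 1 * y.1 1) + y.1 2 * (aW 2 * y.1 2)))) *
        (-((y.1 0 * bb aW 0 * y.2 0 + (y.1 1 * bb aW 1 * y.2 1 + y.1 2 * bb aW 2 * y.2 2)) +
            bb aW 2 * (y.1 0 * y.2 0 + (y.1 1 * y.2 1 + y.1 2 * y.2 2))) * y.1 2 +
          (y.1 0 * y.1 0 + (y.1 1 * y.1 1 + y.1 2 * y.1 2)) * bb aW 2 * y.2 2 -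
          (bb aW 2) ^ 2 * y.2 2 / (2 * dW)) -
      (Real.sqrt (1 - dW * (y.1 0 * (aW 0 * y.1 0) +
        (y.1 1 * (aW 1 * y.1 1) + y.1 2 * (aW 2 * y.1 2)))))⁻¹ * y.1 2 *
        (2 * dW * (y.1 0 * y.1 0 + (y.1 1 * y.1 1 + y.1 2 * y.1 2)) -
          (bb aW 0 + bb aW 1 + bb aW 2)) *
        (((y.1 0 * bb aW 0 * y.2 0 + (y.1 1 * bb aW 1 * y.2 1 + y.1 2 * bb aW 2 * y.2 2)) +
            bb aW 2 * (y.1 0 * y.2 0 + (y.1 1 * y.2 1 + y.1 2 * y.2 2))) * bb aW 2 /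
            ((bb aW 2 + bb aW 0) * (bb aW 2 + bb aW 1)) +
          (bb aW 2 - bb aW 0) * (bb aW 2 - bb aW 1) * bb aW 2 * y.1 2 * y.2 2 /
            ((bb aW 0 + bb aW 1) * (bb aW 1 + bb aW 2) * (bb aW 0 + bb aW 2))) := by
  funext y
  have hg := congrFun gfun_eq y
  simp only [fmm, filter_ne2, alf, dot3, Aapp, Fin.sum_univ_three,
    Finset.prod_insert (by decide : (0 : Fin 3) ∉ ({1} : Finset (Fin 3))),
    Finset.prod_singleton]
  rw [← hg]
  ring

lemma lemB : pd (.inr 2) (fun y : St => fmm aW dW y 2) ptW = -(5/6) := by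
  rw [FB_eq]
  have hpoly : DifferentiableAt ℝ (fun y : St => 1 - dW * (y.1 0 * (aW 0 * y.1 0) +
      (y.1 1 * (aW 1 * y.1 1) + y.1 2 * (aW 2 * y.1 2)))) ptW := by fun_prop
  have hs : DifferentiableAt ℝ (fun y : St => Real.sqrt (1 - dW * (y.1 0 * (aW 0 * y.1 0) +
      (y.1 1 * (aW 1 * y.1 1) + y.1 2 * (aW 2 * y.1 2))))) ptW :=
    hpoly.sqrt (by rw [inner_pt]; norm_num)
  have hsne : Real.sqrt (1 - dW * (ptW.1 0 * (aW 0 * ptW.1 0) +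
      (ptW.1 1 * (aW 1 * ptW.1 1) + ptW.1 2 * (aW 2 * ptW.1 2)))) ≠ 0 := by
    rw [inner_pt, show (1/4:ℝ) = (1/2)^2 by norm_num, Real.sqrt_sq (by norm_num)]
    norm_num
  have hdiff : DifferentiableAt ℝ (fun y : St =>
      Real.sqrt (1 - dW * (y.1 0 * (aW 0 * y.1 0) +
        (y.1 1 * (aW 1 * y.1 1) + y.1 2 * (aW 2 * y.1 2)))) *
        (-((y.1 0 * bb aW 0 * y.2 0 + (y.1 1 * bb aW 1 * y.2 1 + y.1 2 * bb aW 2 * y.2 2)) +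
            bb aW 2 * (y.1 0 * y.2 0 + (y.1 1 * y.2 1 + y.1 2 * y.2 2))) * y.1 2 +
          (y.1 0 * y.1 0 + (y.1 1 * y.1 1 + y.1 2 * y.1 2)) * bb aW 2 * y.2 2 -
          (bb aW 2) ^ 2 * y.2 2 / (2 * dW)) -
      (Real.sqrt (1 - dW * (y.1 0 * (aW 0 * y.1 0) +
        (y.1 1 * (aW 1 * y.1 1) + y.1 2 * (aW 2 * y.1 2)))))⁻¹ * y.1 2 *
        (2 * dW * (y.1 0 * y.1 0 + (y.1 1 * y.1 1 + y.1 2 * y.1 2)) -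
          (bb aW 0 + bb aW 1 + bb aW 2)) *
        (((y.1 0 * bb aW 0 * y.2 0 + (y.1 1 * bb aW 1 * y.2 1 + y.1 2 * bb aW 2 * y.2 2)) +
            bb aW 2 * (y.1 0 * y.2 0 + (y.1 1 * y.2 1 + y.1 2 * y.2 2))) * bb aW 2 /
            ((bb aW 2 + bb aW 0) * (bb aW 2 + bb aW 1)) +
          (bb aW 2 - bb aW 0) * (bb aW 2 - bb aW 1) * bb aW 2 * y.1 2 * y.2 2 /
            ((bb aW 0 + bb aW 1) * (bb aW 1 + bb aW 2) * (bb aW 0 + bb aW 2)))) ptW := by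
    exact (hs.mul (by fun_prop)).sub ((((hs.inv hsne).mul (by fun_prop)).mul (by fun_prop)).mul (by fun_prop))
  rw [pd_inr_line 2 hdiff]
  have hline : (fun t : ℝ => (fun y : St =>
      Real.sqrt (1 - dW * (y.1 0 * (aW 0 * y.1 0) +
        (y.1 1 * (aW 1 * y.1 1) + y.1 2 * (aW 2 * y.1 2)))) *
        (-((y.1 0 * bb aW 0 * y.2 0 + (y.1 1 * bb aW 1 * y.2 1 + y.1 2 * bb aW 2 * y.2 2)) +
            bb aW 2 * (y.1 0 * y.2 0 + (y.1 1 * y.2 1 + y.1 2 * y.2 2))) * y.1 2 +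
          (y.1 0 * y.1 0 + (y.1 1 * y.1 1 + y.1 2 * y.1 2)) * bb aW 2 * y.2 2 -
          (bb aW 2) ^ 2 * y.2 2 / (2 * dW)) -
      (Real.sqrt (1 - dW * (y.1 0 * (aW 0 * y.1 0) +
        (y.1 1 * (aW 1 * y.1 1) + y.1 2 * (aW 2 * y.1 2)))))⁻¹ * y.1 2 *
        (2 * dW * (y.1 0 * y.1 0 + (y.1 1 * y.1 1 + y.1 2 * y.1 2)) -
          (bb aW 0 + bb aW 1 + bb aW 2)) *
        (((y.1 0 * bb aW 0 * y.2 0 + (y.1 1 * bb aW 1 * y.2 1 + y.1 2 * bb aW 2 * y.2 2)) +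
            bb aW 2 * (y.1 0 * y.2 0 + (y.1 1 * y.2 1 + y.1 2 * y.2 2))) * bb aW 2 /
            ((bb aW 2 + bb aW 0) * (bb aW 2 + bb aW 1)) +
          (bb aW 2 - bb aW 0) * (bb aW 2 - bb aW 1) * bb aW 2 * y.1 2 * y.2 2 /
            ((bb aW 0 + bb aW 1) * (bb aW 1 + bb aW 2) * (bb aW 0 + bb aW 2))))
      (ptW.1, ptW.2 + t • (Pi.single 2 1 : R3))) =
      fun t : ℝ => Real.sqrt (1/4) * (-(5/3) * t) := by
    funext t
    have e0 : (ptW.2 + t • (Pi.single 2 1 : R3)) 0 = 0 := by simp [ptW, Pi.single_apply]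
    have e1 : (ptW.2 + t • (Pi.single 2 1 : R3)) 1 = 0 := by simp [ptW, Pi.single_apply]
    have e2 : (ptW.2 + t • (Pi.single 2 1 : R3)) 2 = t := by simp [ptW, Pi.single_apply]
    simp only [e0, e1, e2]
    have p0 : ptW.1 0 = 1 := by norm_num [ptW]
    have p1 : ptW.1 1 = 0 := by norm_num [ptW]
    have p2 : ptW.1 2 = 0 := by norm_num [ptW, Matrix.cons_val_two]
    simp only [p0, p1, p2]
    rw [show 1 - dW * (1 * (aW 0 * 1) + (0 * (aW 1 * 0) + 0 * (aW 2 * 0))) = 1/4 by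
      norm_num [aW, dW]]
    rw [bb0, bb1, bb2]
    norm_num [dW]
    ring
  rw [hline]
  have h1 : HasDerivAt (fun t : ℝ => -(5/3) * t) (-(5/3)) 0 := by
    simpa using (hasDerivAt_id (0:ℝ)).const_mul (-(5/3) : ℝ)
  have hd := h1.const_mul (Real.sqrt (1/4))
  rw [hd.deriv]
  rw [show Real.sqrt (1/4) = 1/2 by
    rw [show (1/4:ℝ) = (1/2)^2 by norm_num, Real.sqrt_sq (by norm_num)]]
  norm_num

lemma pd_zero (s : Fin 3 ⊕ Fin 3) (x : St) : pd s (fun _ => (0:ℝ)) x = 0 := by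
  cases s <;> simp [pd]

lemma pd_neg (s : Fin 3 ⊕ Fin 3) (F : St → ℝ) (x : St) :
    pd s (fun y => -(F y)) x = -(pd s F x) := by
  cases s <;> simp [pd, fderiv_neg]

lemma pmg01 : pmg aW dW ptW.1 0 1 = 0 := by simp [pmg, ptW]
lemma pmg11 : pmg aW dW ptW.1 1 1 = 0 := by simp [pmg, ptW]
lemma pmg10 : pmg aW dW ptW.1 1 0 = 0 := by simp [pmg, ptW]

-- coefficient rows
lemma cP1 (m : Fin 3) : piP ptW (.inl 1) (.inl m) = 0 := rfl
lemma cP1r0 : piP ptW (.inl 1) (.inr 0) = 0 := by norm_num [piP, eps, ptW, Fin.sum_univ_three, Matrix.cons_val_two]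
lemma cP1r1 : piP ptW (.inl 1) (.inr 1) = 0 := by norm_num [piP, eps, ptW, Fin.sum_univ_three]
lemma cP1r2 : piP ptW (.inl 1) (.inr 2) = 1 := by norm_num [piP, eps, ptW, Fin.sum_univ_three]
lemma cPr0l (m : Fin 3) : piP ptW (.inr 0) (.inl m) = 0 := by
  fin_cases m <;> norm_num [piP, eps, ptW, Fin.sum_univ_three, Matrix.cons_val_two]
lemma cPr0r (m : Fin 3) : piP ptW (.inr 0) (.inr m) = 0 := by
  fin_cases m <;> norm_num [piP, eps, ptW, Fin.sum_univ_three, Matrix.cons_val_two]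
lemma cPr1l0 : piP ptW (.inr 1) (.inl 0) = 0 := by norm_num [piP, eps, ptW, Fin.sum_univ_three, Matrix.cons_val_two]
lemma cPr1l1 : piP ptW (.inr 1) (.inl 1) = 0 := by norm_num [piP, eps, ptW, Fin.sum_univ_three]
lemma cPr1l2 : piP ptW (.inr 1) (.inl 2) = 1 := by norm_num [piP, eps, ptW, Fin.sum_univ_three]
lemma cPr1r (m : Fin 3) : piP ptW (.inr 1) (.inr m) = 0 := by
  fin_cases m <;> norm_num [piP, eps, ptW, Fin.sum_univ_three, Matrix.cons_val_two]
lemma cB1l (m : Fin 3) : piB aW dW ptW (.inl 1) (.inl m) = 0 := rfl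
lemma cB1r0 : piB aW dW ptW (.inl 1) (.inr 0) = 0 := by
  show -(pmg aW dW ptW.1 0 1) = 0; rw [pmg01]; norm_num
lemma cB1r1 : piB aW dW ptW (.inl 1) (.inr 1) = 0 := by
  show -(pmg aW dW ptW.1 1 1) = 0; rw [pmg11]; norm_num
lemma cB1r2 : piB aW dW ptW (.inl 1) (.inr 2) = -(5/2) := by
  show -(pmg aW dW ptW.1 2 1) = _; rw [pmg21]
lemma cBr1l0 : piB aW dW ptW (.inr 1) (.inl 0) = 0 := by
  show pmg aW dW ptW.1 1 0 = 0; exact pmg10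
lemma cBr1l1 : piB aW dW ptW (.inr 1) (.inl 1) = 0 := by
  show pmg aW dW ptW.1 1 1 = 0; exact pmg11
lemma cBr1l2 : piB aW dW ptW (.inr 1) (.inl 2) = 25/6 := by
  show pmg aW dW ptW.1 1 2 = _; exact pmg12

/-- the bivector P_b (κ = -1) is not compatible with the canonical
Lie-Poisson bivector P on e*(3): [P, P_b] ≠ 0, i.e. there exist parameters with
pairwise distinct b_i, a point, and coordinate functions for which the mixed
Jacobi sum fails to vanish. -/
theorem incompatibility_P_Pb :
    ∃ (a : R3) (d : ℝ) (x : St) (u v w : Fin 3 ⊕ Fin 3),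
      0 < d ∧ (∀ i, 0 < a i) ∧
      (∀ i j : Fin 3, i ≠ j → bb a i ≠ bb a j) ∧
      (∀ i j : Fin 3, bb a i + bb a j ≠ 0) ∧
      0 < 1 - d * dot3 x.1 (Aapp a x.1) ∧
      (pb piP (coordFn u) (pb (piB a d) (coordFn v) (coordFn w)) x +
       pb piP (coordFn v) (pb (piB a d) (coordFn w) (coordFn u)) x +
       pb piP (coordFn w) (pb (piB a d) (coordFn u) (coordFn v)) x) +
      (pb (piB a d) (coordFn u) (pb piP (coordFn v) (coordFn w)) x +
       pb (piB a d) (coordFn v) (pb piP (coordFn w) (coordFn u)) x +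
       pb (piB a d) (coordFn w) (pb piP (coordFn u) (coordFn v)) x) ≠ 0 := by
  refine ⟨aW, dW, ptW, .inl 1, .inr 0, .inr 1, by norm_num [dW], ?_, ?_, ?_, ?_, ?_⟩
  · intro i; fin_cases i <;> norm_num [aW]
  · intro i j hij
    fin_cases i <;> fin_cases j <;>
      simp_all [bb0, bb1, bb2] <;> norm_num [bb0, bb1, bb2]
  · intro i j
    fin_cases i <;> fin_cases j <;> norm_num [bb, aW, Fin.sum_univ_three, Matrix.cons_val_two]
  · rw [hpoly]; norm_num
  · -- inner bracket rewrites
    have h1i : pb (piB aW dW) (coordFn (.inr 0)) (coordFn (.inr 1)) = fun y => fmm aW dW y 2 := by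
      funext y
      rw [pb_coord]
      show (∑ k, eps 0 1 k * fmm aW dW y k) = _
      norm_num [eps, Fin.sum_univ_three]
    have h3i : pb (piB aW dW) (coordFn (.inl 1)) (coordFn (.inr 0)) =
        fun y => -(pmg aW dW y.1 0 1) := by
      funext y; rw [pb_coord]; rfl
    have h4i : pb piP (coordFn (.inr 0)) (coordFn (.inr 1)) = coordFn (.inr 2) := by
      funext y
      rw [pb_coord]
      show (∑ k, eps 0 1 k * y.2 k) = y.2 2
      norm_num [eps, Fin.sum_univ_three]
    have h5i : pb piP (coordFn (.inr 1)) (coordFn (.inl 1)) = fun _ => (0:ℝ) := by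
      funext y
      rw [pb_coord]
      show (∑ k, eps 1 1 k * y.1 k) = 0
      norm_num [eps, Fin.sum_univ_three]
    have h6i : pb piP (coordFn (.inl 1)) (coordFn (.inr 0)) =
        fun y => -(coordFn (.inl 2) y) := by
      funext y
      rw [pb_coord]
      show (∑ k, eps 1 0 k * y.1 k) = -(y.1 2)
      norm_num [eps, Fin.sum_univ_three]
    rw [h1i, h3i, h4i, h5i, h6i]
    simp only [pb_coord_left, Fintype.sum_sum_type, Fin.sum_univ_three]
    rw [cP1r0, cP1r1, cP1r2, cP1 0, cP1 1, cP1 2,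
      cPr0l 0, cPr0l 1, cPr0l 2, cPr0r 0, cPr0r 1, cPr0r 2,
      cPr1l0, cPr1l1, cPr1l2, cPr1r 0, cPr1r 1, cPr1r 2,
      cB1l 0, cB1l 1, cB1l 2, cB1r0, cB1r1, cB1r2,
      cBr1l0, cBr1l1, cBr1l2,
      lemA, lemB]
    simp only [pd_zero, pd_neg, pd_coord, reduceCtorEq, if_false]
    norm_num
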